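/- For all real a ≥ 0, b ≥ 0 and θ ∈ ℝ, |a − b·e^{iθ}| ≥ √(a² + b²) · |sin(θ/2)|. -/

import Mathlib

open Complex

/-- `|a - b e^{iθ}| ≥ √(a² + b²) |sin (θ/2)|` for `a, b ≥ 0`. -/
theorem abs_sub_mul_exp_ge (a b θ : ℝ) (ha : 0 ≤ a) (hb : 0 ≤ b) :
    Real.sqrt (a ^ 2 + b ^ 2) * |Real.sin (θ / 2)| ≤
      ‖(a : ℂ) - (b : ℂ) * Complex.exp (θ * Complex.I)‖ := by
  have h1 : (0:ℝ) ≤ Real.sqrt (a ^ 2 + b ^ 2) * |Real.sin (θ / 2)| :=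
    mul_nonneg (Real.sqrt_nonneg _) (abs_nonneg _)
  have h2 : (0:ℝ) ≤ ‖(a : ℂ) - (b : ℂ) * Complex.exp (θ * Complex.I)‖ :=
    norm_nonneg _
  rw [← pow_le_pow_iff_left₀ h1 h2 (two_ne_zero)]
  rw [mul_pow, Real.sq_sqrt (by positivity), Complex.sq_norm, _root_.sq_abs]
  rw [Complex.exp_mul_I, ← Complex.ofReal_cos, ← Complex.ofReal_sin]
  have hz : (a : ℂ) - (b : ℂ) * (Real.cos θ + Real.sin θ * Complex.I)
      = Complex.mk (a - b * Real.cos θ) (-(b * Real.sin θ)) := by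
    apply Complex.ext <;> simp [Complex.cos_ofReal_re, Complex.sin_ofReal_re]
  rw [hz, Complex.normSq_mk]
  have hs : Real.sin (θ / 2) ^ 2 = (1 - Real.cos θ) / 2 := by
    have := Real.cos_sq (θ / 2)
    rw [show 2 * (θ / 2) = θ by ring] at this
    have h2 : Real.sin (θ/2) ^ 2 + Real.cos (θ/2) ^ 2 = 1 := Real.sin_sq_add_cos_sq _
    nlinarith
  rw [hs]
  have hc1 : Real.cos θ ≤ 1 := Real.cos_le_one θ
  have hc2 : -1 ≤ Real.cos θ := Real.neg_one_le_cos θ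
  have hsin : Real.sin θ ^ 2 = 1 - Real.cos θ ^ 2 := by
    nlinarith [Real.sin_sq_add_cos_sq θ]
  nlinarith [mul_nonneg ha hb, sq_nonneg (a - b), sq_nonneg (a + b)]
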